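/- Let (Ω, ℱ, P) be a probability space and let x, y : Ω → ℝᵐ be square-integrable random vectors such that Var(x_j | σ(y)) ≤ 1 almost surely for every j. Let f : ℝᵐ → ℝᵐ be measurable with f∘x square-integrable, let J ⊆ {1,…,m} be a nonempty subset, and let g : Ω → ℝᴶ be a square-integrable random vector with Cov(g_j, x_j | σ(y)) = 0 almost surely for every j ∈ J. Then (1/|J|) · Σ_{j∈J} E[ Cov(f(x)_j, x_j | σ(y)) ] ≤ ( (1/|J|) · Σ_{j∈J} E[ (f(x)_j − g_j)² ] )^{1/2}. -/

import Mathlib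

open MeasureTheory Finset

/-- Conditional expectation `E[f | 𝒢]` under measure `μ` (ambient σ-algebra `mΩ`). -/
noncomputable def condExpect {Ω : Type*} {mΩ : MeasurableSpace Ω} (𝒢 : MeasurableSpace Ω)
    (μ : @Measure Ω mΩ) {E : Type*} [NormedAddCommGroup E] [NormedSpace ℝ E] [CompleteSpace E]
    (f : Ω → E) : Ω → E :=
  MeasureTheory.condExp (m₀ := mΩ) 𝒢 μ f

/-- Conditional covariance of two real random variables given a sub-σ-algebra `𝒢`:
`Cov(U, V | 𝒢) = E[U·V | 𝒢] − E[U | 𝒢]·E[V | 𝒢]`. -/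
noncomputable def condCov {Ω : Type*} {mΩ : MeasurableSpace Ω} (𝒢 : MeasurableSpace Ω)
    (μ : @Measure Ω mΩ) (U V : Ω → ℝ) : Ω → ℝ :=
  fun ω => condExpect 𝒢 μ (fun ω' => U ω' * V ω') ω
    - condExpect 𝒢 μ U ω * condExpect 𝒢 μ V ω

/-- Conditional variance: `Var(U | 𝒢) = Cov(U, U | 𝒢)`. -/
noncomputable def condVar {Ω : Type*} {mΩ : MeasurableSpace Ω} (𝒢 : MeasurableSpace Ω)
    (μ : @Measure Ω mΩ) (U : Ω → ℝ) : Ω → ℝ :=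
  condCov 𝒢 μ U U

section Aux

open scoped ENNReal

variable {Ω : Type*} {𝒢 : MeasurableSpace Ω} {mΩ : MeasurableSpace Ω}
  {P : @Measure Ω mΩ} [IsProbabilityMeasure P]

omit [IsProbabilityMeasure P] in
lemma aux_int_mul {W V : Ω → ℝ} (hW : MemLp W 2 P) (hV : MemLp V 2 P) :
    Integrable (fun ω => W ω * V ω) P := by
  refine Integrable.mono' ((hW.integrable_sq.add hV.integrable_sq).const_mul (1/2))
    (hW.aestronglyMeasurable.mul hV.aestronglyMeasurable) ?_
  filter_upwards with ω
  rw [Real.norm_eq_abs, abs_mul]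
  simp only [Pi.add_apply]
  nlinarith [sq_nonneg (|W ω| - |V ω|), sq_abs (W ω), sq_abs (V ω), abs_nonneg (W ω),
    abs_nonneg (V ω)]

lemma aux_memℒp_two_condexp (hm : 𝒢 ≤ mΩ) {V : Ω → ℝ} (hV : MemLp V 2 P) :
    MemLp (P[V|𝒢]) 2 P := by
  set gL : Lp ℝ 2 P :=
    ((condExpL2 (α := Ω) (m0 := mΩ) (μ := P) ℝ ℝ hm (hV.toLp V) : lpMeas ℝ ℝ 𝒢 2 P) : Lp ℝ 2 P)
    with hgLdef
  set g : Ω → ℝ := (gL : Ω → ℝ) with hg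
  have hgL : MemLp g 2 P := Lp.memLp gL
  have h : g =ᵐ[P] P[V|𝒢] := by
    refine ae_eq_condExp_of_forall_setIntegral_eq hm (hV.integrable one_le_two)
      (fun s _ _ => (hgL.integrable one_le_two).integrableOn) (fun s hs hμs => ?_)
      (aestronglyMeasurable_condExpL2 hm _)
    rw [hg, hgLdef,       integral_condExpL2_eq hm (hV.toLp V) hs hμs.ne]
    exact setIntegral_congr_ae (hm s hs) ((hV.coeFn_toLp).mono fun ω hω _ => hω)
  exact hgL.ae_eq h

lemma aux_pullout (hm : 𝒢 ≤ mΩ) {φ V : Ω → ℝ} (hφm : StronglyMeasurable[𝒢] φ)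
    (hφ : MemLp φ 2 P) (hV : MemLp V 2 P) :
    ∫ ω, φ ω * V ω ∂P = ∫ ω, φ ω * (P[V|𝒢]) ω ∂P := by
  have h1 : Integrable (φ * V) P := aux_int_mul hφ hV
  have h2 : P[φ * V|𝒢] =ᵐ[P] φ * P[V|𝒢] :=
    condExp_mul_of_stronglyMeasurable_left hφm h1 (hV.integrable one_le_two)
  calc ∫ ω, φ ω * V ω ∂P = ∫ ω, (φ * V) ω ∂P := rfl
    _ = ∫ ω, (P[φ * V|𝒢]) ω ∂P := (integral_condExp hm).symm
    _ = ∫ ω, (φ * P[V|𝒢]) ω ∂P := integral_congr_ae h2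
    _ = ∫ ω, φ ω * (P[V|𝒢]) ω ∂P := rfl

lemma aux_integral_mul_le_sqrt {h k : Ω → ℝ} (hh : MemLp h 2 P) (hk : MemLp k 2 P) :
    ∫ ω, h ω * k ω ∂P ≤ Real.sqrt (∫ ω, h ω ^ 2 ∂P) * Real.sqrt (∫ ω, k ω ^ 2 ∂P) := by
  have h22 : (2 : ℝ).HolderConjugate 2 := ⟨by norm_num, by norm_num, by norm_num⟩
  have ho2 : ENNReal.ofReal (2:ℝ) = 2 := by norm_num
  have hha : MemLp (fun ω => |h ω|) (ENNReal.ofReal (2:ℝ)) P := by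
    rw [ho2]; simpa [Real.norm_eq_abs] using hh.norm
  have hka : MemLp (fun ω => |k ω|) (ENNReal.ofReal (2:ℝ)) P := by
    rw [ho2]; simpa [Real.norm_eq_abs] using hk.norm
  have hcs := integral_mul_le_Lp_mul_Lq_of_nonneg h22
    (Filter.Eventually.of_forall fun ω => abs_nonneg (h ω))
    (Filter.Eventually.of_forall fun ω => abs_nonneg (k ω)) hha hka
  have e1 : ∀ (u : Ω → ℝ), (∫ ω, |u ω| ^ (2:ℝ) ∂P) = ∫ ω, u ω ^ 2 ∂P := by
    intro u; refine integral_congr_ae (Filter.Eventually.of_forall fun ω => ?_)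
    show |u ω| ^ (2:ℝ) = u ω ^ 2
    rw [Real.rpow_two, sq_abs]
  rw [e1 h, e1 k] at hcs
  calc ∫ ω, h ω * k ω ∂P ≤ ∫ ω, |h ω| * |k ω| ∂P := by
        refine integral_mono (aux_int_mul hh hk) ?_ fun ω => ?_
        · simpa [Real.norm_eq_abs] using aux_int_mul hh.norm hk.norm
        · rw [← abs_mul]; exact le_abs_self _
    _ ≤ (∫ ω, h ω ^ 2 ∂P) ^ (1/(2:ℝ)) * (∫ ω, k ω ^ 2 ∂P) ^ (1/(2:ℝ)) := hcs
    _ = _ := by rw [Real.sqrt_eq_rpow, Real.sqrt_eq_rpow]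

lemma aux_int_condCov (hm : 𝒢 ≤ mΩ) {W V : Ω → ℝ} (hW : MemLp W 2 P) (hV : MemLp V 2 P) :
    ∫ ω, condCov 𝒢 P W V ω ∂P = ∫ ω, W ω * (V ω - (P[V|𝒢]) ω) ∂P := by
  have hE : MemLp (P[V|𝒢]) 2 P := aux_memℒp_two_condexp hm hV
  have hEW : MemLp (P[W|𝒢]) 2 P := aux_memℒp_two_condexp hm hW
  have h1 : Integrable (P[fun ω => W ω * V ω|𝒢]) P := integrable_condExp
  have h2 : Integrable (fun ω => (P[W|𝒢]) ω * (P[V|𝒢]) ω) P := aux_int_mul hEW hE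
  have hstep : ∫ ω, condCov 𝒢 P W V ω ∂P
      = ∫ ω, W ω * V ω ∂P - ∫ ω, (P[W|𝒢]) ω * (P[V|𝒢]) ω ∂P := by
    rw [show (fun ω => condCov 𝒢 P W V ω)
        = fun ω => (P[fun ω' => W ω' * V ω'|𝒢]) ω - (P[W|𝒢]) ω * (P[V|𝒢]) ω from rfl,
      integral_sub h1 h2, integral_condExp hm]
  have h3 : ∫ ω, (P[W|𝒢]) ω * (P[V|𝒢]) ω ∂P = ∫ ω, W ω * (P[V|𝒢]) ω ∂P := by
    have h4 := aux_pullout hm (stronglyMeasurable_condExp (f := V)) hE hW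
    calc ∫ ω, (P[W|𝒢]) ω * (P[V|𝒢]) ω ∂P = ∫ ω, (P[V|𝒢]) ω * (P[W|𝒢]) ω ∂P := by
          simp_rw [mul_comm]
      _ = ∫ ω, (P[V|𝒢]) ω * W ω ∂P := h4.symm
      _ = ∫ ω, W ω * (P[V|𝒢]) ω ∂P := by simp_rw [mul_comm]
  rw [hstep, h3, ← integral_sub (aux_int_mul hW hV) (aux_int_mul hW hE)]
  simp_rw [mul_sub]

lemma aux_key (hm : 𝒢 ≤ mΩ) {U V G : Ω → ℝ} (hU : MemLp U 2 P) (hV : MemLp V 2 P)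
    (hG : MemLp G 2 P)
    (hvar : ∀ᵐ ω ∂P, condCov 𝒢 P V V ω ≤ 1)
    (hcov : ∀ᵐ ω ∂P, condCov 𝒢 P G V ω = 0) :
    ∫ ω, condCov 𝒢 P U V ω ∂P ≤ Real.sqrt (∫ ω, (U ω - G ω) ^ 2 ∂P) := by
  have hE : MemLp (P[V|𝒢]) 2 P := aux_memℒp_two_condexp hm hV
  set Vd : Ω → ℝ := fun ω => V ω - (P[V|𝒢]) ω with hVddef
  have hVd : MemLp Vd 2 P := hV.sub hE
  have hGv : ∫ ω, G ω * Vd ω ∂P = 0 := by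
    rw [← aux_int_condCov hm hG hV]
    exact integral_eq_zero_of_ae hcov
  have hUG : ∫ ω, condCov 𝒢 P U V ω ∂P = ∫ ω, (U ω - G ω) * Vd ω ∂P := by
    rw [aux_int_condCov hm hU hV]
    rw [show (fun ω => (U ω - G ω) * Vd ω) = fun ω => U ω * Vd ω - G ω * Vd ω by
      funext ω; ring]
    rw [integral_sub (aux_int_mul hU hVd) (aux_int_mul hG hVd), hGv, sub_zero]
  have hEVd : ∫ ω, (P[V|𝒢]) ω * Vd ω ∂P = 0 := by
    have h4 := aux_pullout hm (stronglyMeasurable_condExp (f := V)) hE hV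
    rw [show (fun ω => (P[V|𝒢]) ω * Vd ω)
        = fun ω => (P[V|𝒢]) ω * V ω - (P[V|𝒢]) ω * (P[V|𝒢]) ω by funext ω; ring,
      integral_sub (aux_int_mul hE hV) (aux_int_mul hE hE), h4, sub_self]
  have hvv : ∫ ω, Vd ω ^ 2 ∂P = ∫ ω, condCov 𝒢 P V V ω ∂P := by
    rw [aux_int_condCov hm hV hV,
      show (fun ω => Vd ω ^ 2) = fun ω => V ω * Vd ω - (P[V|𝒢]) ω * Vd ω by
        funext ω; simp [hVddef]; ring,
      integral_sub (aux_int_mul hV hVd) (aux_int_mul hE hVd), hEVd, sub_zero]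
  have hvar1 : ∫ ω, Vd ω ^ 2 ∂P ≤ 1 := by
    rw [hvv]
    have hint : Integrable (fun ω => condCov 𝒢 P V V ω) P :=
      integrable_condExp.sub (aux_int_mul hE hE)
    calc ∫ ω, condCov 𝒢 P V V ω ∂P ≤ ∫ _ω, (1:ℝ) ∂P :=
          integral_mono_ae hint (integrable_const 1) hvar
      _ = 1 := by simp
  calc ∫ ω, condCov 𝒢 P U V ω ∂P = ∫ ω, (U ω - G ω) * Vd ω ∂P := hUG
    _ ≤ Real.sqrt (∫ ω, (U ω - G ω) ^ 2 ∂P) * Real.sqrt (∫ ω, Vd ω ^ 2 ∂P) :=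
        aux_integral_mul_le_sqrt (hU.sub hG) hVd
    _ ≤ Real.sqrt (∫ ω, (U ω - G ω) ^ 2 ∂P) :=
        mul_le_of_le_one_right (Real.sqrt_nonneg _) (Real.sqrt_le_one.2 hvar1)

end Aux

lemma aux_memℒp_proj {Ω : Type*} [mΩ : MeasurableSpace Ω] {P : Measure Ω} {m : ℕ}
    {x : Ω → EuclideanSpace ℝ (Fin m)} (hxm : Measurable x) (hx : MemLp x 2 P) (j : Fin m) :
    MemLp (fun ω => x ω j) 2 P := by
  have hmeas : Measurable (fun ω => x ω j) := (measurable_pi_apply j).comp ((WithLp.measurable_ofLp _ _).comp hxm)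
  refine hx.of_le hmeas.aestronglyMeasurable ?_
  filter_upwards with ω
  rw [Real.norm_eq_abs, ← Real.sqrt_sq_eq_abs, EuclideanSpace.norm_eq]
  apply Real.sqrt_le_sqrt
  calc (x ω j) ^ 2 = ‖x ω j‖ ^ 2 := by rw [Real.norm_eq_abs, sq_abs]
    _ ≤ ∑ i, ‖x ω i‖ ^ 2 :=
        Finset.single_le_sum (f := fun i => ‖x ω i‖ ^ 2) (fun i _ => sq_nonneg _)
          (Finset.mem_univ j)

/-- **Averaged conditional covariance bound over a downsampled subimage.**
If `Var(xⱼ | σ(y)) ≤ 1` a.s. for every `j` and `Cov(gⱼ, xⱼ | σ(y)) = 0` a.s. for `j ∈ J`, then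
`(1/|J|) Σ_{j∈J} E[Cov(f(x)ⱼ, xⱼ | σ(y))] ≤ ((1/|J|) Σ_{j∈J} E[(f(x)ⱼ − gⱼ)²])^{1/2}`. -/
theorem avg_condCov_le_sqrt_avg_sq_diff
    {Ω : Type*} [mΩ : MeasurableSpace Ω] (P : Measure Ω) [IsProbabilityMeasure P]
    (m : ℕ) (x y : Ω → EuclideanSpace ℝ (Fin m))
    (hxm : Measurable x) (hym : Measurable y)
    (hx : MemLp x 2 P) (hy : MemLp y 2 P)
    (hvar : ∀ j : Fin m, ∀ᵐ ω ∂P,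
      condVar (MeasurableSpace.comap y inferInstance) P (fun ω' => x ω' j) ω ≤ 1)
    (f : EuclideanSpace ℝ (Fin m) → EuclideanSpace ℝ (Fin m)) (hf : Measurable f)
    (hfx : MemLp (fun ω => f (x ω)) 2 P)
    (J : Finset (Fin m)) (hJ : J.Nonempty)
    (g : Fin m → Ω → ℝ) (hg : ∀ j ∈ J, MemLp (g j) 2 P)
    (hgcov : ∀ j ∈ J, ∀ᵐ ω ∂P,
      condCov (MeasurableSpace.comap y inferInstance) P (g j) (fun ω' => x ω' j) ω = 0) :
    (1 / (J.card : ℝ)) * ∑ j ∈ J, ∫ ω, condCov (MeasurableSpace.comap y inferInstance) P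
        (fun ω' => f (x ω') j) (fun ω' => x ω' j) ω ∂P ≤
      Real.sqrt ((1 / (J.card : ℝ)) * ∑ j ∈ J, ∫ ω, (f (x ω) j - g j ω) ^ 2 ∂P) := by
  set 𝒢 : MeasurableSpace Ω := MeasurableSpace.comap y inferInstance with h𝒢
  have hm : 𝒢 ≤ mΩ := hym.comap_le
  set A : Fin m → ℝ := fun j => ∫ ω, condCov 𝒢 P
    (fun ω' => f (x ω') j) (fun ω' => x ω' j) ω ∂P with hA
  set b : Fin m → ℝ := fun j => ∫ ω, (f (x ω) j - g j ω) ^ 2 ∂P with hb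
  have hb0 : ∀ j, 0 ≤ b j := fun j => integral_nonneg fun ω => sq_nonneg _
  have hAb : ∀ j ∈ J, A j ≤ Real.sqrt (b j) := by
    intro j hj
    exact aux_key hm (@aux_memℒp_proj Ω mΩ P m (fun ω => f (x ω)) (hf.comp hxm) hfx j)
      (@aux_memℒp_proj Ω mΩ P m x hxm hx j) (hg j hj) (hvar j) (hgcov j hj)
  have hn : (0:ℝ) < (J.card : ℝ) := by
    exact_mod_cast Finset.card_pos.mpr hJ
  have hsum : ∑ j ∈ J, A j ≤ Real.sqrt ((J.card : ℝ) * ∑ j ∈ J, b j) := by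
    have h1 : ∑ j ∈ J, A j ≤ ∑ j ∈ J, Real.sqrt (b j) := Finset.sum_le_sum hAb
    have h2 : (∑ j ∈ J, Real.sqrt (b j)) ^ 2 ≤ (J.card : ℝ) * ∑ j ∈ J, b j := by
      have := Finset.sum_mul_sq_le_sq_mul_sq J (fun _ => (1:ℝ)) (fun j => Real.sqrt (b j))
      simpa [Real.sq_sqrt, hb0, Finset.sum_congr rfl fun j (hj : j ∈ J) => Real.sq_sqrt (hb0 j)]
        using this
    have h3 : ∑ j ∈ J, Real.sqrt (b j) ≤ Real.sqrt ((J.card : ℝ) * ∑ j ∈ J, b j) := by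
      have hnn : 0 ≤ ∑ j ∈ J, Real.sqrt (b j) :=
        Finset.sum_nonneg fun j _ => Real.sqrt_nonneg _
      have h4 := Real.sqrt_le_sqrt h2
      rwa [Real.sqrt_sq hnn] at h4
    exact h1.trans h3
  have key : (1 / (J.card : ℝ)) * Real.sqrt ((J.card : ℝ) * ∑ j ∈ J, b j)
      = Real.sqrt ((1 / (J.card : ℝ)) * ∑ j ∈ J, b j) := by
    rw [show (1 / (J.card : ℝ)) * Real.sqrt ((J.card : ℝ) * ∑ j ∈ J, b j)
        = Real.sqrt ((1 / (J.card : ℝ)) ^ 2) * Real.sqrt ((J.card : ℝ) * ∑ j ∈ J, b j) by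
          rw [Real.sqrt_sq (by positivity)],
      ← Real.sqrt_mul (by positivity)]
    congr 1
    field_simp
  calc (1 / (J.card : ℝ)) * ∑ j ∈ J, A j
      ≤ (1 / (J.card : ℝ)) * Real.sqrt ((J.card : ℝ) * ∑ j ∈ J, b j) := by
        exact mul_le_mul_of_nonneg_left hsum (by positivity)
    _ = Real.sqrt ((1 / (J.card : ℝ)) * ∑ j ∈ J, b j) := key
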